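/- arXiv:1510.00121 — 2 statements merged into one kernel-verified Lean document; each statement's English description precedes it below -/
import Mathlib

section
/- Fix m ≥ 1 and 0 < ε < 1. The set of operators {√(1−ε²)·I} ∪ {ε·R_j : j = 0,...,2^m−1}, where R_j = |0⟩⟨j| acts on C^{2^m} (mapping the j-th standard basis vector to the 0-th and annihilating all others), is linearly independent. Consequently any Kraus representation of the weak error-correcting map ρ ↦ (1−ε²)ρ + ε² Σ_j R_j ρ R_j† requires at least 2^m + 1 Kraus operators. -/
open scoped Matrix ComplexConjugate InnerProductSpace

private lemma conj_sandwich_entry {n : ℕ} (A : Matrix (Fin n) (Fin n) ℂ) (a b c d : Fin n) :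
    (A * Matrix.single b d (1:ℂ) * Aᴴ) a c = A a b * (starRingEnd ℂ) (A c d) := by
  simp [Matrix.mul_apply, Matrix.single, Matrix.conjTranspose_apply, Finset.sum_mul,
    mul_ite, ite_mul, Matrix.of_apply, ite_and, Finset.sum_ite_eq, Finset.sum_ite_eq']

private lemma card_ge_of_choi {n L N : ℕ}
    (K : Fin L → Matrix (Fin n) (Fin n) ℂ) (E : Fin N → Matrix (Fin n) (Fin n) ℂ)
    (hE : LinearIndependent ℂ E)
    (h : ∀ a b c d : Fin n, (∑ l, K l a b * conj (K l c d))
        = ∑ i, E i a b * conj (E i c d)) : N ≤ L := by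
  classical
  let vecE : Matrix (Fin n) (Fin n) ℂ ≃ₗ[ℂ] EuclideanSpace ℂ (Fin n × Fin n) :=
    (LinearEquiv.curry ℂ ℂ (Fin n) (Fin n)).symm.trans (WithLp.linearEquiv 2 ℂ _).symm
  have hvec : ∀ (M : Matrix (Fin n) (Fin n) ℂ) (p : Fin n × Fin n), vecE M p = M p.1 p.2 :=
    fun M p => rfl
  set P : Submodule ℂ (EuclideanSpace ℂ (Fin n × Fin n)) :=
    Submodule.span ℂ (Set.range fun l => vecE (K l)) with hP
  have key : ∀ v : EuclideanSpace ℂ (Fin n × Fin n),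
      (∀ l, ⟪v, vecE (K l)⟫_ℂ = 0) → ∀ i, ⟪v, vecE (E i)⟫_ℂ = 0 := by
    intro v hv i
    set z : Matrix (Fin n) (Fin n) ℂ → ℂ :=
      fun M => ∑ p : Fin n × Fin n, conj (v p) * M p.1 p.2 with hzdef
    have hinner : ∀ M, ⟪v, vecE M⟫_ℂ = z M := by
      intro M
      simp [PiLp.inner_apply, RCLike.inner_apply, hvec, hzdef]
      exact Finset.sum_congr rfl fun _ _ => mul_comm _ _
    have hz : ∀ M : Matrix (Fin n) (Fin n) ℂ, z M * conj (z M)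
        = ∑ p : Fin n × Fin n, ∑ q : Fin n × Fin n,
            (conj (v p) * v q) * (M p.1 p.2 * conj (M q.1 q.2)) := by
      intro M
      simp only [hzdef, map_sum, map_mul, Finset.sum_mul_sum, Complex.conj_conj]
      exact Finset.sum_congr rfl fun p _ => Finset.sum_congr rfl fun q _ => by ring
    have swap : ∀ {N' : ℕ} (F : Fin N' → Matrix (Fin n) (Fin n) ℂ),
        (∑ t, ∑ p : Fin n × Fin n, ∑ q : Fin n × Fin n,
          (conj (v p) * v q) * (F t p.1 p.2 * conj (F t q.1 q.2)))
        = ∑ p : Fin n × Fin n, ∑ q : Fin n × Fin n,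
            (conj (v p) * v q) * ∑ t, F t p.1 p.2 * conj (F t q.1 q.2) := by
      intro N' F
      rw [Finset.sum_comm]
      refine Finset.sum_congr rfl fun p _ => ?_
      rw [Finset.sum_comm]
      refine Finset.sum_congr rfl fun q _ => ?_
      rw [Finset.mul_sum]
    have main : (∑ l, z (K l) * conj (z (K l))) = ∑ i, z (E i) * conj (z (E i)) := by
      simp only [hz]
      rw [swap, swap]
      exact Finset.sum_congr rfl fun p _ => Finset.sum_congr rfl fun q _ => by
        rw [h p.1 p.2 q.1 q.2]
    have hzero : (∑ i, z (E i) * conj (z (E i))) = 0 := by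
      rw [← main]
      refine Finset.sum_eq_zero fun l _ => ?_
      have : z (K l) = 0 := by rw [← hinner]; exact hv l
      simp [this]
    have hreal : (∑ i, Complex.normSq (z (E i)) : ℝ) = 0 := by
      have : ((∑ i, Complex.normSq (z (E i)) : ℝ) : ℂ) = 0 := by
        push_cast
        rw [← hzero]
        exact Finset.sum_congr rfl fun i _ => (Complex.mul_conj (z (E i))).symm
      exact_mod_cast this
    have : Complex.normSq (z (E i)) = 0 := by
      have hnn : ∀ j ∈ Finset.univ, (0:ℝ) ≤ Complex.normSq (z (E j)) :=
        fun j _ => Complex.normSq_nonneg _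
      exact (Finset.sum_eq_zero_iff_of_nonneg hnn).mp hreal i (Finset.mem_univ i)
    rw [hinner]
    exact Complex.normSq_eq_zero.mp this
  have hEP : ∀ i, vecE (E i) ∈ P := by
    intro i
    rw [← Submodule.orthogonal_orthogonal P]
    rw [Submodule.mem_orthogonal]
    intro u hu
    have hu' : ∀ l, ⟪u, vecE (K l)⟫_ℂ = 0 := by
      intro l
      have : vecE (K l) ∈ P := Submodule.subset_span ⟨l, rfl⟩
      exact (Submodule.mem_orthogonal' P u).mp hu _ this
    exact key u hu' i
  have h1 : LinearIndependent ℂ (fun i => vecE (E i)) :=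
    hE.map' vecE.toLinearMap vecE.ker
  have h2 : LinearIndependent ℂ (fun i => (⟨vecE (E i), hEP i⟩ : P)) :=
    LinearIndependent.of_comp P.subtype h1
  have h3 : N ≤ Module.finrank ℂ P := by
    simpa using h2.fintype_card_le_finrank
  have h4 : Module.finrank ℂ P ≤ L := by
    simpa [Set.finrank] using finrank_range_le_card (fun l => vecE (K l))
  omega

/-- The Kraus operators {√(1-ε²)·I} ∪ {ε·|0⟩⟨j|} are linearly independent, so any
Kraus representation of the weak error-correcting map needs ≥ 2^m + 1 operators. -/
theorem weak_correction_kraus_linearIndependent_and_min_card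
    (m : ℕ) (hm : 1 ≤ m) (ε : ℝ) (hε0 : 0 < ε) (hε1 : ε < 1) :
    LinearIndependent ℂ (fun l : Fin (2 ^ m + 1) =>
      if h : (l : ℕ) < 2 ^ m then
        (ε : ℂ) • Matrix.single (0 : Fin (2 ^ m)) ⟨l, h⟩ (1 : ℂ)
      else ((Real.sqrt (1 - ε ^ 2) : ℝ) : ℂ) • (1 : Matrix (Fin (2 ^ m)) (Fin (2 ^ m)) ℂ)) ∧
    ∀ (L : ℕ) (K : Fin L → Matrix (Fin (2 ^ m)) (Fin (2 ^ m)) ℂ),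
      (∀ l, K l ≠ 0) →
      (∀ ρ : Matrix (Fin (2 ^ m)) (Fin (2 ^ m)) ℂ,
        ∑ l, K l * ρ * (K l)ᴴ =
          (((1 - ε ^ 2 : ℝ)) : ℂ) • ρ +
            ((ε ^ 2 : ℝ) : ℂ) • ∑ j : Fin (2 ^ m),
              Matrix.single (0 : Fin (2 ^ m)) j (1 : ℂ) * ρ *
                (Matrix.single (0 : Fin (2 ^ m)) j (1 : ℂ))ᴴ) →
      L ≥ 2 ^ m + 1 := by
  have hn2 : 2 ≤ 2 ^ m := by
    calc 2 = 2 ^ 1 := rfl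
    _ ≤ 2 ^ m := Nat.pow_le_pow_right (by norm_num) hm
  have hd : (0:ℝ) < 1 - ε ^ 2 := by
    nlinarith [mul_pos (by linarith : (0:ℝ) < 1 - ε) (by linarith : (0:ℝ) < 1 + ε)]
  have hsq : (Real.sqrt (1 - ε ^ 2) : ℂ) ≠ 0 :=
    Complex.ofReal_ne_zero.mpr (ne_of_gt (Real.sqrt_pos.mpr hd))
  have hεne : (ε : ℂ) ≠ 0 := by
    simp only [ne_eq, Complex.ofReal_eq_zero]
    positivity
  have hind : LinearIndependent ℂ (fun l : Fin (2 ^ m + 1) =>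
      if h : (l : ℕ) < 2 ^ m then
        (ε : ℂ) • Matrix.single (0 : Fin (2 ^ m)) ⟨l, h⟩ (1 : ℂ)
      else ((Real.sqrt (1 - ε ^ 2) : ℝ) : ℂ) • (1 : Matrix (Fin (2 ^ m)) (Fin (2 ^ m)) ℂ)) := by
    rw [Fintype.linearIndependent_iff]
    intro g hg
    have hentry : ∀ a b : Fin (2 ^ m), (∑ l : Fin (2 ^ m + 1),
        g l • (if h : (l : ℕ) < 2 ^ m then
          (ε : ℂ) • Matrix.single (0 : Fin (2 ^ m)) ⟨l, h⟩ (1 : ℂ)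
        else ((Real.sqrt (1 - ε ^ 2) : ℝ) : ℂ) •
          (1 : Matrix (Fin (2 ^ m)) (Fin (2 ^ m)) ℂ))) a b = 0 := by
      intro a b; rw [hg]; rfl
    have h1 : ((0 : Fin (2 ^ m)) ≠ ⟨1, by omega⟩) := by
      intro hcon
      have := congrArg Fin.val hcon
      simp at this
    have hlast : g (Fin.last (2 ^ m)) = 0 := by
      have h := hentry ⟨1, by omega⟩ ⟨1, by omega⟩
      rw [Fin.sum_univ_castSucc] at h
      simp only [Matrix.add_apply, Matrix.sum_apply, Matrix.smul_apply, Fin.coe_castSucc,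
        Fin.is_lt, dif_pos, Fin.eta, Fin.val_last, lt_irrefl, dif_neg, not_lt, le_refl,
        reduceDIte, Matrix.single, Matrix.of_apply, smul_eq_mul, Matrix.one_apply_eq,
        mul_one, h1, false_and, if_false, mul_zero, Finset.sum_const_zero, zero_add] at h
      exact (mul_eq_zero.mp h).resolve_right hsq
    intro i
    by_cases hi : (i : ℕ) < 2 ^ m
    · have h := hentry 0 ⟨i, hi⟩
      rw [Fin.sum_univ_castSucc] at h
      simp only [Matrix.add_apply, Matrix.sum_apply, Matrix.smul_apply, Fin.coe_castSucc,
        Fin.is_lt, dif_pos, Fin.eta, Fin.val_last, lt_irrefl, reduceDIte, not_lt,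
        Matrix.single, Matrix.of_apply, smul_eq_mul, Matrix.one_apply, true_and,
        hlast, zero_mul, add_zero, mul_ite, mul_one, mul_zero, Finset.sum_ite_eq',
        Finset.mem_univ, if_true] at h
      rw [ite_self, add_zero] at h
      have hc : (⟨(i : ℕ), hi⟩ : Fin (2 ^ m)).castSucc = i := Fin.ext (by simp)
      rw [hc] at h
      exact (mul_eq_zero.mp h).resolve_right hεne
    · have hle := i.isLt
      have hieq : i = Fin.last (2 ^ m) := by
        apply Fin.ext
        simp only [Fin.val_last]
        omega
      rw [hieq]; exact hlast
  refine ⟨hind, ?_⟩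
  intro L K _hKne hKrep
  have hrep : ∀ ρ : Matrix (Fin (2 ^ m)) (Fin (2 ^ m)) ℂ,
      (∑ i : Fin (2 ^ m + 1), (if h : (i : ℕ) < 2 ^ m then
          (ε : ℂ) • Matrix.single (0 : Fin (2 ^ m)) ⟨i, h⟩ (1 : ℂ)
        else ((Real.sqrt (1 - ε ^ 2) : ℝ) : ℂ) • (1 : Matrix (Fin (2 ^ m)) (Fin (2 ^ m)) ℂ)) * ρ *
        (if h : (i : ℕ) < 2 ^ m then
          (ε : ℂ) • Matrix.single (0 : Fin (2 ^ m)) ⟨i, h⟩ (1 : ℂ)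
        else ((Real.sqrt (1 - ε ^ 2) : ℝ) : ℂ) • (1 : Matrix (Fin (2 ^ m)) (Fin (2 ^ m)) ℂ))ᴴ)
      = (((1 - ε ^ 2 : ℝ)) : ℂ) • ρ +
          ((ε ^ 2 : ℝ) : ℂ) • ∑ j : Fin (2 ^ m),
            Matrix.single (0 : Fin (2 ^ m)) j (1 : ℂ) * ρ *
              (Matrix.single (0 : Fin (2 ^ m)) j (1 : ℂ))ᴴ := by
    intro ρ
    rw [Fin.sum_univ_castSucc]
    have hterm : ∀ l : Fin (2 ^ m),
        ((ε : ℂ) • Matrix.single (0 : Fin (2 ^ m)) l (1 : ℂ)) * ρ *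
          ((ε : ℂ) • Matrix.single (0 : Fin (2 ^ m)) l (1 : ℂ))ᴴ
        = ((ε ^ 2 : ℝ) : ℂ) • (Matrix.single (0 : Fin (2 ^ m)) l (1 : ℂ) * ρ *
            (Matrix.single (0 : Fin (2 ^ m)) l (1 : ℂ))ᴴ) := by
      intro l
      rw [Matrix.conjTranspose_smul, Matrix.smul_mul, Matrix.smul_mul, Matrix.mul_smul,
        smul_smul]
      congr 1
      simp [Complex.star_def, Complex.conj_ofReal]
      ring
    have hlast : (((Real.sqrt (1 - ε ^ 2) : ℝ) : ℂ) •
          (1 : Matrix (Fin (2 ^ m)) (Fin (2 ^ m)) ℂ)) * ρ *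
        (((Real.sqrt (1 - ε ^ 2) : ℝ) : ℂ) • (1 : Matrix (Fin (2 ^ m)) (Fin (2 ^ m)) ℂ))ᴴ
        = (((1 - ε ^ 2 : ℝ)) : ℂ) • ρ := by
      rw [Matrix.conjTranspose_smul, Matrix.conjTranspose_one, Matrix.smul_mul, Matrix.smul_mul,
        Matrix.mul_smul, Matrix.one_mul, Matrix.mul_one, smul_smul]
      congr 1
      simp only [Complex.star_def, Complex.conj_ofReal]
      rw [← Complex.ofReal_mul, Real.mul_self_sqrt hd.le]
    simp only [Fin.coe_castSucc, Fin.is_lt, dif_pos, Fin.eta, Fin.val_last, lt_irrefl,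
      reduceDIte]
    rw [hlast, add_comm]
    congr 1
    rw [Finset.smul_sum]
    exact Finset.sum_congr rfl fun l _ => hterm l
  refine card_ge_of_choi K (fun l : Fin (2 ^ m + 1) =>
      if h : (l : ℕ) < 2 ^ m then
        (ε : ℂ) • Matrix.single (0 : Fin (2 ^ m)) ⟨l, h⟩ (1 : ℂ)
      else ((Real.sqrt (1 - ε ^ 2) : ℝ) : ℂ) • (1 : Matrix (Fin (2 ^ m)) (Fin (2 ^ m)) ℂ))
      hind ?_
  intro a b c d
  have hmat := (hKrep (Matrix.single b d (1:ℂ))).trans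
    (hrep (Matrix.single b d (1:ℂ))).symm
  have h2 := congrFun (congrFun hmat a) c
  calc (∑ l, K l a b * conj (K l c d))
      = (∑ l, K l * Matrix.single b d (1:ℂ) * (K l)ᴴ) a c := by
        rw [Matrix.sum_apply]
        exact (Finset.sum_congr rfl fun l _ => conj_sandwich_entry (K l) a b c d).symm
    _ = (∑ i : Fin (2 ^ m + 1), (if h : (i : ℕ) < 2 ^ m then
          (ε : ℂ) • Matrix.single (0 : Fin (2 ^ m)) ⟨i, h⟩ (1 : ℂ)
        else ((Real.sqrt (1 - ε ^ 2) : ℝ) : ℂ) • (1 : Matrix (Fin (2 ^ m)) (Fin (2 ^ m)) ℂ)) *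
          Matrix.single b d (1:ℂ) *
        (if h : (i : ℕ) < 2 ^ m then
          (ε : ℂ) • Matrix.single (0 : Fin (2 ^ m)) ⟨i, h⟩ (1 : ℂ)
        else ((Real.sqrt (1 - ε ^ 2) : ℝ) : ℂ) •
          (1 : Matrix (Fin (2 ^ m)) (Fin (2 ^ m)) ℂ))ᴴ) a c := h2
    _ = _ := by
        rw [Matrix.sum_apply]
        exact Finset.sum_congr rfl fun i _ => conj_sandwich_entry _ a b c d
end

section
/- Let f : ℝ → ℝ solve f' = κ(1 − f) − 3λ·g(t) where 0 ≤ g(t) ≤ 1, with κ, λ > 0 and f(0) = 1. Then for all t ≥ 0, f(t) ≥ 1 − (3λ/κ)(1 − e^{−κt}); in particular f(t) ≥ 1 − 3λ/κ for all t ≥ 0. -/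
/-- Comparison bound for the CTQEC codeword fidelity: if f' = κ(1−f) − 3λg with
0 ≤ g ≤ 1, f(0) = 1, then f(t) ≥ 1 − (3λ/κ)(1 − e^{−κt}) ≥ 1 − 3λ/κ for t ≥ 0. -/
theorem ctqec_fidelity_lower_bound (kap lam : ℝ) (hk : 0 < kap) (hl : 0 < lam)
    (f g : ℝ → ℝ) (hg : ∀ t, 0 ≤ g t ∧ g t ≤ 1)
    (hf : ∀ t, HasDerivAt f (kap * (1 - f t) - 3 * lam * g t) t)
    (hf0 : f 0 = 1) :
    ∀ t : ℝ, 0 ≤ t →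
      f t ≥ 1 - (3 * lam / kap) * (1 - Real.exp (-kap * t)) ∧
      f t ≥ 1 - 3 * lam / kap := by
  set c : ℝ := 3 * lam / kap with hc
  set u : ℝ → ℝ := fun t => Real.exp (kap * t) * (f t - 1) + c * (Real.exp (kap * t) - 1)
    with hu
  have hderiv : ∀ t, HasDerivAt u (3 * lam * Real.exp (kap * t) * (1 - g t)) t := by
    intro t
    have he : HasDerivAt (fun t => Real.exp (kap * t)) (kap * Real.exp (kap * t)) t := by
      exact ((Real.hasDerivAt_exp (kap * t)).comp t
        ((hasDerivAt_id t).const_mul kap)).congr_deriv (by ring)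
    have h1 : HasDerivAt (fun t => Real.exp (kap * t) * (f t - 1))
        (kap * Real.exp (kap * t) * (f t - 1) +
          Real.exp (kap * t) * (kap * (1 - f t) - 3 * lam * g t)) t :=
      he.mul ((hf t).sub_const 1)
    have h2 : HasDerivAt (fun t => c * (Real.exp (kap * t) - 1))
        (c * (kap * Real.exp (kap * t))) t := (he.sub_const 1).const_mul c
    have := h1.add h2
    have hck : c * kap = 3 * lam := by rw [hc, div_mul_cancel₀ _ hk.ne']
    refine this.congr_deriv ?_
    have : c * (kap * Real.exp (kap * t)) = 3 * lam * Real.exp (kap * t) := by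
      rw [← mul_assoc, hck]
    rw [this]; ring
  have hmono : MonotoneOn u (Set.Ici 0) := by
    apply monotoneOn_of_deriv_nonneg (convex_Ici 0)
    · exact (continuous_iff_continuousAt.mpr
        (fun x => ((hderiv x).differentiableAt).continuousAt)).continuousOn
    · intro x _
      exact (hderiv x).differentiableAt.differentiableWithinAt
    · intro x _
      rw [(hderiv x).deriv]
      have h1 : (0:ℝ) ≤ 1 - g x := by linarith [(hg x).2]
      have h2 : (0:ℝ) ≤ 3 * lam * Real.exp (kap * x) := by positivity
      exact mul_nonneg h2 h1
  intro t ht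
  have hu0 : u 0 = 0 := by simp [hu, hf0]
  have hut : 0 ≤ u t := by
    have := hmono (Set.self_mem_Ici) (Set.mem_Ici.mpr ht) ht
    rwa [hu0] at this
  have hexp : 0 < Real.exp (kap * t) := Real.exp_pos _
  have hinv : Real.exp (-kap * t) = (Real.exp (kap * t))⁻¹ := by
    rw [← Real.exp_neg]; ring_nf
  have key : f t ≥ 1 - c * (1 - Real.exp (-kap * t)) := by
    have h : Real.exp (kap * t) * (f t - 1) + c * (Real.exp (kap * t) - 1) ≥ 0 := hut
    rw [hinv]
    have hne : Real.exp (kap * t) ≠ 0 := ne_of_gt hexp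
    rw [ge_iff_le, ← sub_nonneg]
    have expand : f t - (1 - c * (1 - (Real.exp (kap * t))⁻¹)) =
        (Real.exp (kap * t) * (f t - 1) + c * (Real.exp (kap * t) - 1)) / Real.exp (kap * t) := by
      field_simp
      ring
    rw [expand]
    positivity
  refine ⟨key, ?_⟩
  have hc0 : 0 ≤ c := by positivity
  have hexp2 : 0 ≤ Real.exp (-kap * t) := (Real.exp_pos _).le
  have : 1 - c * (1 - Real.exp (-kap * t)) ≥ 1 - c := by nlinarith
  calc f t ≥ 1 - c * (1 - Real.exp (-kap * t)) := key
    _ ≥ 1 - 3 * lam / kap := by rw [← hc]; exact this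
end
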